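/- For generalized kinematic invariants $\mathsf{s}_{abc}$ on 6 particles satisfying momentum conservation, the identities $\mathsf{t}_{1234}+\mathsf{t}_{3456}+\mathsf{t}_{5612} = R_1 + \tilde{R}_1$ and $\mathsf{t}_{2345}+\mathsf{t}_{4561}+\mathsf{t}_{6123} = R_2 + \tilde{R}_2$ hold, where $\mathsf{t}_{abcd} = \mathsf{s}_{abc}+\mathsf{s}_{abd}+\mathsf{s}_{acd}+\mathsf{s}_{bcd}$, $R_{abcdef} = \mathsf{t}_{abcd}+\mathsf{s}_{cde}+\mathsf{s}_{cdf}$, $R_1 = R_{123456}$, $\tilde{R}_1 = R_{125634}$, $R_2 = R_{234561}$, $\tilde{R}_2 = R_{614523}$. -/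
import Mathlib

/-- `tQuad s a b c d = 𝗍_{abcd} = 𝗌_{abc} + 𝗌_{abd} + 𝗌_{acd} + 𝗌_{bcd}`. -/
def tQuad (s : ℕ → ℕ → ℕ → ℝ) (a b c d : ℕ) : ℝ :=
  s a b c + s a b d + s a c d + s b c d

/-- `R_{abcdef} = 𝗍_{abcd} + 𝗌_{cde} + 𝗌_{cdf}`. -/
def RR (s : ℕ → ℕ → ℕ → ℝ) (a b c d e f : ℕ) : ℝ :=
  tQuad s a b c d + s c d e + s c d f

theorem bipyramid_identities (s : ℕ → ℕ → ℕ → ℝ)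
    (hsymm1 : ∀ a b c, s a b c = s b a c)
    (hsymm2 : ∀ a b c, s a b c = s a c b)
    (hrep : ∀ a c, s a a c = 0)
    (hmom : ∀ a ∈ Finset.Icc 1 6,
      ∑ b ∈ Finset.Icc 1 6, ∑ c ∈ Finset.Icc 1 6,
        (if b < c ∧ a ≠ b ∧ a ≠ c then s a b c else 0) = 0) :
    tQuad s 1 2 3 4 + tQuad s 3 4 5 6 + tQuad s 5 6 1 2 =
      RR s 1 2 3 4 5 6 + RR s 1 2 5 6 3 4 ∧
    tQuad s 2 3 4 5 + tQuad s 4 5 6 1 + tQuad s 6 1 2 3 =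
      RR s 2 3 4 5 6 1 + RR s 6 1 4 5 2 3 := by
  have hperm : ∀ a b c, s b c a = s a b c ∧ s c a b = s a b c ∧ s b a c = s a b c ∧
      s a c b = s a b c ∧ s c b a = s a b c := by
    intro a b c
    refine ⟨?_, ?_, ?_, ?_, ?_⟩
    · rw [hsymm1 b c a, hsymm2 c b a, hsymm1 c a b, hsymm2 a c b]
    · rw [hsymm1 c a b, hsymm2 a c b]
    · rw [hsymm1 b a c]
    · rw [hsymm2 a c b]
    · rw [hsymm1 c b a, hsymm2 b c a, hsymm1 b a c]
  have hIcc : Finset.Icc 1 6 = (({1,2,3,4,5,6} : Finset ℕ) : Finset ℕ) := by decide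
  have h1 := hmom 1 (by decide)
  have h2 := hmom 2 (by decide)
  have h3 := hmom 3 (by decide)
  have h4 := hmom 4 (by decide)
  have h5 := hmom 5 (by decide)
  have h6 := hmom 6 (by decide)
  rw [hIcc] at h1 h2 h3 h4 h5 h6
  norm_num [Finset.sum_insert, Finset.mem_insert] at h1 h2 h3 h4 h5 h6
  constructor <;> simp only [tQuad, RR] <;>
    linarith [h1, h2, h3, h4, h5, h6,
      (hperm 1 2 3).1,
      (hperm 1 2 3).2.1,
      (hperm 1 2 3).2.2.1,
      (hperm 1 2 3).2.2.2.1,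
      (hperm 1 2 3).2.2.2.2,
      (hperm 1 2 4).1,
      (hperm 1 2 4).2.1,
      (hperm 1 2 4).2.2.1,
      (hperm 1 2 4).2.2.2.1,
      (hperm 1 2 4).2.2.2.2,
      (hperm 1 2 5).1,
      (hperm 1 2 5).2.1,
      (hperm 1 2 5).2.2.1,
      (hperm 1 2 5).2.2.2.1,
      (hperm 1 2 5).2.2.2.2,
      (hperm 1 2 6).1,
      (hperm 1 2 6).2.1,
      (hperm 1 2 6).2.2.1,
      (hperm 1 2 6).2.2.2.1,
      (hperm 1 2 6).2.2.2.2,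
      (hperm 1 3 4).1,
      (hperm 1 3 4).2.1,
      (hperm 1 3 4).2.2.1,
      (hperm 1 3 4).2.2.2.1,
      (hperm 1 3 4).2.2.2.2,
      (hperm 1 3 5).1,
      (hperm 1 3 5).2.1,
      (hperm 1 3 5).2.2.1,
      (hperm 1 3 5).2.2.2.1,
      (hperm 1 3 5).2.2.2.2,
      (hperm 1 3 6).1,
      (hperm 1 3 6).2.1,
      (hperm 1 3 6).2.2.1,
      (hperm 1 3 6).2.2.2.1,
      (hperm 1 3 6).2.2.2.2,
      (hperm 1 4 5).1,
      (hperm 1 4 5).2.1,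
      (hperm 1 4 5).2.2.1,
      (hperm 1 4 5).2.2.2.1,
      (hperm 1 4 5).2.2.2.2,
      (hperm 1 4 6).1,
      (hperm 1 4 6).2.1,
      (hperm 1 4 6).2.2.1,
      (hperm 1 4 6).2.2.2.1,
      (hperm 1 4 6).2.2.2.2,
      (hperm 1 5 6).1,
      (hperm 1 5 6).2.1,
      (hperm 1 5 6).2.2.1,
      (hperm 1 5 6).2.2.2.1,
      (hperm 1 5 6).2.2.2.2,
      (hperm 2 3 4).1,
      (hperm 2 3 4).2.1,
      (hperm 2 3 4).2.2.1,
      (hperm 2 3 4).2.2.2.1,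
      (hperm 2 3 4).2.2.2.2,
      (hperm 2 3 5).1,
      (hperm 2 3 5).2.1,
      (hperm 2 3 5).2.2.1,
      (hperm 2 3 5).2.2.2.1,
      (hperm 2 3 5).2.2.2.2,
      (hperm 2 3 6).1,
      (hperm 2 3 6).2.1,
      (hperm 2 3 6).2.2.1,
      (hperm 2 3 6).2.2.2.1,
      (hperm 2 3 6).2.2.2.2,
      (hperm 2 4 5).1,
      (hperm 2 4 5).2.1,
      (hperm 2 4 5).2.2.1,
      (hperm 2 4 5).2.2.2.1,
      (hperm 2 4 5).2.2.2.2,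
      (hperm 2 4 6).1,
      (hperm 2 4 6).2.1,
      (hperm 2 4 6).2.2.1,
      (hperm 2 4 6).2.2.2.1,
      (hperm 2 4 6).2.2.2.2,
      (hperm 2 5 6).1,
      (hperm 2 5 6).2.1,
      (hperm 2 5 6).2.2.1,
      (hperm 2 5 6).2.2.2.1,
      (hperm 2 5 6).2.2.2.2,
      (hperm 3 4 5).1,
      (hperm 3 4 5).2.1,
      (hperm 3 4 5).2.2.1,
      (hperm 3 4 5).2.2.2.1,
      (hperm 3 4 5).2.2.2.2,
      (hperm 3 4 6).1,
      (hperm 3 4 6).2.1,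
      (hperm 3 4 6).2.2.1,
      (hperm 3 4 6).2.2.2.1,
      (hperm 3 4 6).2.2.2.2,
      (hperm 3 5 6).1,
      (hperm 3 5 6).2.1,
      (hperm 3 5 6).2.2.1,
      (hperm 3 5 6).2.2.2.1,
      (hperm 3 5 6).2.2.2.2,
      (hperm 4 5 6).1,
      (hperm 4 5 6).2.1,
      (hperm 4 5 6).2.2.1,
      (hperm 4 5 6).2.2.2.1,
      (hperm 4 5 6).2.2.2.2]
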